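/- Let S be any n×n matrix over ℤ[t,t⁻¹], let J be S padded with a last row (0,…,0,1) and last column (0,…,0,1)ᵀ to size (n+1)×(n+1), and let Ω be the identity matrix of size n+1 except with bottom-right 2×2 block [[1+t, t²],[−1, 1−t]]. Then det(J·Ω − I) = −t · det(S − I). -/

import Mathlib

open Matrix LaurentPolynomial

/-- Pad an `n × n` matrix with a last row `(0,…,0,1)` and last column `(0,…,0,1)ᵀ`. -/
noncomputable def pad (n : ℕ) (S : Matrix (Fin n) (Fin n) (LaurentPolynomial ℤ)) :
    Matrix (Fin (n + 1)) (Fin (n + 1)) (LaurentPolynomial ℤ) :=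
  Matrix.of fun i j =>
    if hi : (i : ℕ) < n then
      if hj : (j : ℕ) < n then S ⟨i, hi⟩ ⟨j, hj⟩ else 0
    else if (j : ℕ) < n then 0 else 1

/-- The `(n+1) × (n+1)` identity except the bottom-right `2 × 2` block is
`[[1+t, t²], [-1, 1-t]]` (requires `1 ≤ n`). -/
noncomputable def wadaStab (n : ℕ) (hn : 1 ≤ n) :
    Matrix (Fin (n + 1)) (Fin (n + 1)) (LaurentPolynomial ℤ) :=
  1 + single ⟨n - 1, by omega⟩ ⟨n - 1, by omega⟩ (T 1)
    + single ⟨n - 1, by omega⟩ ⟨n, by omega⟩ (T 2)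
    + single ⟨n, by omega⟩ ⟨n - 1, by omega⟩ (-1)
    + single ⟨n, by omega⟩ ⟨n, by omega⟩ (-(T 1))

theorem stmt15 (n : ℕ) (hn : 1 ≤ n) (S : Matrix (Fin n) (Fin n) (LaurentPolynomial ℤ)) :
    (pad n S * wadaStab n hn - 1).det = -(T 1) * (S - 1).det := by
  have hn1 : n - 1 < n + 1 := by omega
  have hn2 : n < n + 1 := by omega
  have hn3 : n - 1 < n := by omega
  set p : Fin (n + 1) := ⟨n - 1, hn1⟩ with hp
  set q : Fin (n + 1) := ⟨n, hn2⟩ with hq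
  have vp : ((⟨n - 1, hn1⟩ : Fin (n + 1)) : ℕ) = n - 1 := rfl
  have vq : ((⟨n, hn2⟩ : Fin (n + 1)) : ℕ) = n := rfl
  have hqp : q ≠ p := by
    simp only [hp, hq, ne_eq, Fin.mk.injEq]
    omega
  set M' : Matrix (Fin (n + 1)) (Fin (n + 1)) (LaurentPolynomial ℤ) := Matrix.of fun i j =>
    if hi : (i : ℕ) < n then
      if hj : (j : ℕ) < n then
        (if (j : ℕ) = n - 1 then (1 + T 1) * S ⟨i, hi⟩ ⟨j, hj⟩ else S ⟨i, hi⟩ ⟨j, hj⟩)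
          - (if (i : ℕ) = (j : ℕ) then 1 else 0)
      else -(T 1) * (S ⟨i, hi⟩ ⟨n - 1, hn3⟩ - (if (i : ℕ) = n - 1 then 1 else 0))
    else if (j : ℕ) = n - 1 then -1 else 0 with hM'def
  have hW : wadaStab n hn = 1 + single p p (T 1) + single p q (T 2)
      + single q p (-1) + single q q (-(T 1)) := rfl
  have hT2 : (T 2 : LaurentPolynomial ℤ) = T 1 * T 1 := by
    rw [show (2 : ℤ) = 1 + 1 by norm_num, T_add]
  have hM : pad n S * wadaStab n hn - 1
      = M'.updateCol q (fun k => M' k q + (T 1 : LaurentPolynomial ℤ) • M' k p) := by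
    refine Matrix.ext fun i j => ?_
    rw [hW]
    have hi1 := i.isLt
    have hj1 := j.isLt
    simp only [Matrix.mul_add, Matrix.mul_one, Matrix.sub_apply, Matrix.add_apply,
      Matrix.updateCol_apply, smul_eq_mul]
    by_cases hjq : j = q
    · subst hjq
      simp only [Matrix.mul_single_apply_same,
        Matrix.mul_single_apply_of_ne (hbj := hqp), if_pos rfl]
      simp only [hM'def, pad, Matrix.of_apply, Matrix.one_apply, hp, hq, vp, vq,
        Fin.ext_iff, hT2]
      split_ifs
      all_goals try (exfalso; omega)
      all_goals ring1
    · by_cases hjp : j = p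
      · subst hjp
        simp only [Matrix.mul_single_apply_same,
          Matrix.mul_single_apply_of_ne (hbj := hqp.symm), if_neg hjq]
        simp only [hM'def, pad, Matrix.of_apply, Matrix.one_apply, hp, hq, vp, vq,
          Fin.ext_iff, hT2]
        split_ifs
        all_goals try (exfalso; omega)
        all_goals ring1
      · have hjq' : (j : ℕ) ≠ n := fun h => hjq (Fin.ext h)
        have hjp' : (j : ℕ) ≠ n - 1 := fun h => hjp (Fin.ext h)
        rw [Matrix.mul_single_apply_of_ne (hbj := hjp),
          Matrix.mul_single_apply_of_ne (hbj := hjq),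
          Matrix.mul_single_apply_of_ne (hbj := hjp),
          Matrix.mul_single_apply_of_ne (hbj := hjq), if_neg hjq]
        simp only [hM'def, pad, Matrix.of_apply, Matrix.one_apply, hp, hq, vp, vq,
          Fin.ext_iff, hT2]
        split_ifs
        all_goals try (exfalso; omega)
        all_goals ring1
  rw [hM, det_updateCol_add_smul_self M' hqp]
  -- Laplace expansion of M' along the last row
  rw [det_succ_row M' q]
  rw [Finset.sum_eq_single_of_mem p (Finset.mem_univ p) ?zero]
  case zero =>
    intro b _ hbp
    have hMqb : M' q b = 0 := by
      simp only [hM'def, Matrix.of_apply, hq, vq]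
      rw [dif_neg (by omega : ¬ (n : ℕ) < n),
        if_neg (show ¬ (b : ℕ) = n - 1 from fun h => hbp (Fin.ext h))]
    rw [hMqb]
    ring
  have hMqp : M' q p = -1 := by
    simp only [hM'def, Matrix.of_apply, hq, hp, vq, vp]
    rw [dif_neg (by omega : ¬ (n : ℕ) < n)]
    simp
  have hminor : M'.submatrix q.succAbove p.succAbove
      = (S - 1).updateCol ⟨n - 1, hn3⟩
          ((-(T 1) : LaurentPolynomial ℤ) • (fun k => (S - 1) k ⟨n - 1, hn3⟩)) := by
    refine Matrix.ext fun k l => ?_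
    have hqlast : q = Fin.last n := rfl
    rw [Matrix.submatrix_apply, hqlast, Fin.succAbove_last]
    by_cases hl : (l : ℕ) < n - 1
    · have hps : p.succAbove l = l.castSucc :=
        Fin.succAbove_of_castSucc_lt _ _ (by simp [Fin.lt_def, hp, vp]; omega)
      rw [hps, Matrix.updateCol_ne (show l ≠ ⟨n - 1, hn3⟩ from by
        simp only [ne_eq, Fin.ext_iff]; omega)]
      have hk1 := k.isLt
      simp only [hM'def, Matrix.of_apply, Matrix.sub_apply, Matrix.one_apply,
        Fin.coe_castSucc, Fin.ext_iff, Fin.eta, Pi.smul_apply, smul_eq_mul]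
      split_ifs
      all_goals try (exfalso; omega)
      all_goals ring1
    · have hln : (l : ℕ) = n - 1 := by omega
      have hleq : l = ⟨n - 1, hn3⟩ := Fin.ext hln
      have hps : p.succAbove l = l.succ :=
        Fin.succAbove_of_le_castSucc _ _ (by simp [Fin.le_def, hp, vp]; omega)
      rw [hps, hleq, Matrix.updateCol_self]
      have hk1 := k.isLt
      simp only [hM'def, Matrix.of_apply, Matrix.sub_apply, Matrix.one_apply,
        Fin.val_succ, Fin.ext_iff, Fin.eta, smul_eq_mul, vp, Fin.coe_castSucc, Pi.smul_apply]
      rw [dif_pos hk1, dif_neg (by omega : ¬ (n - 1 + 1 : ℕ) < n)]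
  rw [hminor, det_updateCol_smul]
  rw [Matrix.updateCol_eq_self, hMqp]
  have hodd : ((-1 : LaurentPolynomial ℤ)) ^ ((q : ℕ) + (p : ℕ)) = -1 :=
    Odd.neg_one_pow (by simp only [hp, hq, vp, vq]; exact ⟨n - 1, by omega⟩)
  rw [hodd]
  ring
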